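/- For X ~ Binomial(n,p) and integer k with k/n ≤ p, the probability P(X ≤ k) ≤ exp(-n·D(k/n‖p)), where D(q1‖q2) = q1·log(q1/q2) + (1-q1)·log((1-q1)/(1-q2)) is the two-point KL divergence. -/

import Mathlib

/-- Two-point (Bernoulli) Kullback–Leibler divergence. -/
noncomputable def klBer (a b : ℝ) : ℝ :=
  a * Real.log (a / b) + (1 - a) * Real.log ((1 - a) / (1 - b))

/-- Chernoff bound: for `X ~ Binomial(n,p)` and `k/n ≤ p`,
`P(X ≤ k) ≤ exp (-n · D(k/n ‖ p))`. -/
theorem binomial_lower_tail_chernoff (n k : ℕ) (p : ℝ)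
    (hn : 0 < n) (hp : 0 < p) (hp1 : p < 1) (hk : (k : ℝ) / n ≤ p) :
    ∑ i ∈ Finset.range (k + 1), (n.choose i : ℝ) * p ^ i * (1 - p) ^ (n - i)
      ≤ Real.exp (-(n : ℝ) * klBer ((k : ℝ) / n) p) := by
  have hn' : (0:ℝ) < n := by exact_mod_cast hn
  set a : ℝ := (k:ℝ)/n with ha
  have hq : 0 < 1 - p := by linarith
  have ha1 : a < 1 := lt_of_le_of_lt hk hp1
  rcases Nat.eq_zero_or_pos k with hk0 | hk1
  · subst hk0
    have ha0 : a = 0 := by simp [ha]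
    rw [ha0]
    have : klBer 0 p = Real.log (1 / (1 - p)) := by
      simp [klBer]
    rw [this]
    have : -(n:ℝ) * Real.log (1 / (1 - p)) = (n:ℝ) * Real.log (1 - p) := by
      rw [one_div, Real.log_inv]; ring
    rw [this, ← Real.log_pow, Real.exp_log (by positivity)]
    simp
  · have ha0 : 0 < a := by
      apply div_pos _ hn'
      exact_mod_cast hk1
    have hkn : k ≤ n := by
      by_contra h
      push_neg at h
      have : (1:ℝ) < a := by
        rw [ha, lt_div_iff₀ hn']
        have : (n:ℝ) < k := by exact_mod_cast h
        linarith
      linarith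
    have hna : (k:ℝ) = n * a := by
      rw [ha]; field_simp
    set r : ℝ := a * (1 - p) / ((1 - a) * p) with hrdef
    have h1a : 0 < 1 - a := by linarith
    have hr0 : 0 < r := by positivity
    have hr1 : r ≤ 1 := by
      rw [hrdef, div_le_one (by positivity)]
      nlinarith [hk]
    have hc : p * r + (1 - p) = (1 - p) / (1 - a) := by
      rw [hrdef]; field_simp; ring
    have key : (1 / r ^ k) * ((1 - p) / (1 - a)) ^ n
        = Real.exp (-(n:ℝ) * klBer a p) := by
      have hpos : 0 < (1 / r ^ k) * ((1 - p) / (1 - a)) ^ n := by positivity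
      rw [← Real.exp_log hpos]
      congr 1
      rw [Real.log_mul (by positivity) (by positivity), one_div, Real.log_inv,
        Real.log_pow, Real.log_pow, hrdef,
        Real.log_div (by positivity) (by positivity),
        Real.log_div (by positivity) (by positivity),
        Real.log_mul (by positivity) (by positivity),
        Real.log_mul (by positivity) (by positivity)]
      have hkl : klBer a p = a * (Real.log a - Real.log p)
          + (1 - a) * (Real.log (1 - a) - Real.log (1 - p)) := by
        rw [klBer, Real.log_div (ne_of_gt ha0) (ne_of_gt hp),
          Real.log_div (ne_of_gt h1a) (ne_of_gt hq)]
      rw [hkl, hna]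
      ring
    calc ∑ i ∈ Finset.range (k + 1), (n.choose i : ℝ) * p ^ i * (1 - p) ^ (n - i)
        ≤ ∑ i ∈ Finset.range (k + 1),
            ((n.choose i : ℝ) * (p * r) ^ i * (1 - p) ^ (n - i)) * (1 / r ^ k) := by
          apply Finset.sum_le_sum
          intro i hi
          have hik : i ≤ k := Nat.lt_succ_iff.mp (Finset.mem_range.mp hi)
          have hrle : r ^ k ≤ r ^ i := pow_le_pow_of_le_one (le_of_lt hr0) hr1 hik
          rw [mul_pow]
          have : (n.choose i : ℝ) * (p ^ i * r ^ i) * (1 - p) ^ (n - i) * (1 / r ^ k)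
              = ((n.choose i : ℝ) * p ^ i * (1 - p) ^ (n - i)) * (r ^ i / r ^ k) := by
            ring
          rw [this]
          have h1 : (1:ℝ) ≤ r ^ i / r ^ k := (one_le_div (by positivity)).mpr hrle
          nlinarith [mul_nonneg (mul_nonneg (mul_nonneg (Nat.cast_nonneg (n.choose i))
            (pow_nonneg (le_of_lt hp) i)) (pow_nonneg (le_of_lt hq) (n - i))) (le_of_lt hr0)]
      _ = (∑ i ∈ Finset.range (k + 1),
            (n.choose i : ℝ) * (p * r) ^ i * (1 - p) ^ (n - i)) * (1 / r ^ k) := by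
          rw [Finset.sum_mul]
      _ ≤ (∑ i ∈ Finset.range (n + 1),
            (n.choose i : ℝ) * (p * r) ^ i * (1 - p) ^ (n - i)) * (1 / r ^ k) := by
          apply mul_le_mul_of_nonneg_right _ (by positivity)
          apply Finset.sum_le_sum_of_subset_of_nonneg
          · exact Finset.range_subset_range.mpr (by omega)
          · intro i _ _
            positivity
      _ = (p * r + (1 - p)) ^ n * (1 / r ^ k) := by
          rw [add_pow]
          congr 1
          apply Finset.sum_congr rfl
          intro i _
          ring
      _ = (1 / r ^ k) * ((1 - p) / (1 - a)) ^ n := by rw [hc]; ring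
      _ = Real.exp (-(n:ℝ) * klBer a p) := key
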